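/- Let x : ℤ → {0,1} and define y_i = f156(x_{i−1}, x_i, x_{i+1}). Then for every n ≥ 2, the product ∏_{i=0}^{n} y_i equals ∏_{i=0}^{n+1} x_i. -/

import Mathlib

/-- Polynomial form of the local function of rule 156. -/
def f156 (a b c : ℤ) : ℤ := (1 - a) * b + a * b * c + a * (1 - b) * (1 - c)

lemma f156_binary (a b c : ℤ) (ha : a = 0 ∨ a = 1) (hb : b = 0 ∨ b = 1)
    (hc : c = 0 ∨ c = 1) : f156 a b c = 0 ∨ f156 a b c = 1 := by
  rcases ha with rfl | rfl <;> rcases hb with rfl | rfl <;> rcases hc with rfl | rfl <;>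
    simp [f156]

lemma f156_key (a b c d : ℤ) (ha : a = 0 ∨ a = 1) (hb : b = 0 ∨ b = 1)
    (hc : c = 0 ∨ c = 1) (hd : d = 0 ∨ d = 1)
    (h1 : f156 a b c = 1) (h2 : f156 b c d = 1) : b = 1 := by
  rcases ha with rfl | rfl <;> rcases hb with rfl | rfl <;> rcases hc with rfl | rfl <;>
    rcases hd with rfl | rfl <;> simp_all [f156]

lemma f156_one_one (c : ℤ) : f156 1 1 c = c := by simp [f156]

lemma f156_all_one (a : ℤ) : f156 a 1 1 = 1 := by simp [f156]

theorem stmt3 (x : ℤ → ℤ) (hx : ∀ i, x i = 0 ∨ x i = 1)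
    (y : ℤ → ℤ) (hy : ∀ i, y i = f156 (x (i - 1)) (x i) (x (i + 1)))
    (n : ℕ) (hn : 2 ≤ n) :
    ∏ i ∈ Finset.Icc (0 : ℤ) (n : ℤ), y i = ∏ i ∈ Finset.Icc (0 : ℤ) ((n : ℤ) + 1), x i := by
  have hn' : (2 : ℤ) ≤ (n : ℤ) := by exact_mod_cast hn
  by_cases hall : ∀ i ∈ Finset.Icc (0 : ℤ) ((n : ℤ) + 1), x i = 1
  · rw [Finset.prod_eq_one hall, Finset.prod_eq_one]
    intro i hi
    simp only [Finset.mem_Icc] at hi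
    have hb : x i = 1 := hall i (by rw [Finset.mem_Icc]; omega)
    have hc : x (i + 1) = 1 := hall (i + 1) (by rw [Finset.mem_Icc]; omega)
    rw [hy, hb, hc, f156_all_one]
  · push_neg at hall
    obtain ⟨j, hjmem, hj1⟩ := hall
    have hj0 : x j = 0 := (hx j).resolve_right hj1
    rw [Finset.prod_eq_zero hjmem hj0]
    -- show some y i = 0
    by_contra hcon
    -- then all y i on [0,n] equal 1
    have hy1 : ∀ i ∈ Finset.Icc (0 : ℤ) (n : ℤ), y i = 1 := by
      intro i hi
      rcases (f156_binary _ _ _ (hx (i-1)) (hx i) (hx (i+1))).imp_left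
          (fun h => (hy i).trans h) with h0 | h1
      · exact absurd (Finset.prod_eq_zero hi h0) hcon
      · exact (hy i).trans h1
    -- step A : x i = 1 for 0 ≤ i ≤ n - 1
    have hA : ∀ i : ℤ, 0 ≤ i → i ≤ (n : ℤ) - 1 → x i = 1 := by
      intro i h0 h1
      have hyi : f156 (x (i - 1)) (x i) (x (i + 1)) = 1 := by
        rw [← hy]; exact hy1 i (by rw [Finset.mem_Icc]; omega)
      have hyi1 : f156 (x i) (x (i + 1)) (x (i + 2)) = 1 := by
        have := hy1 (i + 1) (by rw [Finset.mem_Icc]; omega)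
        rw [hy] at this
        have e1 : i + 1 - 1 = i := by ring
        have e2 : i + 1 + 1 = i + 2 := by ring
        rwa [e1, e2] at this
      exact f156_key _ _ _ _ (hx (i-1)) (hx i) (hx (i+1)) (hx (i+2)) hyi hyi1
    -- step B : x n = 1
    have hBn : x ((n : ℤ)) = 1 := by
      have h1 : x ((n : ℤ) - 1 - 1) = 1 := hA _ (by omega) (by omega)
      have h2 : x ((n : ℤ) - 1) = 1 := hA _ (by omega) (by omega)
      have := hy1 ((n : ℤ) - 1) (by rw [Finset.mem_Icc]; omega)
      rw [hy, h1, h2, f156_one_one] at this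
      have e : (n : ℤ) - 1 + 1 = (n : ℤ) := by ring
      rwa [e] at this
    -- step C : x (n+1) = 1
    have hBn1 : x ((n : ℤ) + 1) = 1 := by
      have h1 : x ((n : ℤ) - 1) = 1 := hA _ (by omega) (by omega)
      have := hy1 (n : ℤ) (by rw [Finset.mem_Icc]; omega)
      rw [hy, h1, hBn, f156_one_one] at this
      exact this
    -- contradiction with x j = 0
    simp only [Finset.mem_Icc] at hjmem
    rcases lt_or_ge j (n : ℤ) with hj | hj
    · have := hA j hjmem.1 (by omega)
      omega
    · rcases eq_or_lt_of_le hj with hj' | hj'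
      · rw [hj'] at hBn; omega
      · have hje : j = (n : ℤ) + 1 := by omega
        rw [hje] at hj0; omega
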